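/- There exists a constant C > 0 such that for every real ν ≥ 1 and every real δ ≥ 0, one has |J_ν(ν δ)| ≤ C · ν^{-1/2} · (e δ / 2)^ν. -/

import Mathlib

open scoped BigOperators

/-- The Bessel function of the first kind `J_ν(x)` for real order `ν` and `x ≥ 0`. -/
noncomputable def besselJ (ν x : ℝ) : ℝ :=
  ∑' j : ℕ, ((-1) ^ j / (j.factorial * Real.Gamma (ν + j + 1))) * (x / 2) ^ (ν + 2 * (j : ℝ))

open MeasureTheory Real Set Nat Filter


lemma complex_eq_real_integrand {a b s : ℝ} (hs : s ∈ Ioc (0:ℝ) 1) :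
    (s:ℂ) ^ ((a:ℂ) - 1) * (1 - (s:ℂ)) ^ ((b:ℂ) - 1)
      = ((s ^ (a - 1) * (1 - s) ^ (b - 1) : ℝ) : ℂ) := by
  have h0 : (0:ℝ) ≤ s := le_of_lt hs.1
  have h1 : (0:ℝ) ≤ 1 - s := by linarith [hs.2]
  have e1 : ((s:ℂ)) ^ ((a:ℂ) - 1) = ((s ^ (a - 1) : ℝ) : ℂ) := by
    rw [show ((a:ℂ) - 1) = ((a - 1 : ℝ) : ℂ) by push_cast; ring, ← Complex.ofReal_cpow h0]
  have e2 : ((1 - (s:ℂ))) ^ ((b:ℂ) - 1) = (((1 - s) ^ (b - 1) : ℝ) : ℂ) := by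
    rw [show (1 - (s:ℂ)) = (((1 - s : ℝ)) : ℂ) by push_cast; ring,
      show ((b:ℂ) - 1) = ((b - 1 : ℝ) : ℂ) by push_cast; ring, ← Complex.ofReal_cpow h1]
  rw [e1, e2, ← Complex.ofReal_mul]

lemma realBeta_integrable {a b : ℝ} (ha : 0 < a) (hb : 0 < b) :
    IntegrableOn (fun s : ℝ => s ^ (a - 1) * (1 - s) ^ (b - 1)) (Ioc 0 1) := by
  have hc := (Complex.betaIntegral_convergent (u := (a : ℂ)) (v := (b : ℂ))
    (by simpa using ha) (by simpa using hb)).1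
  have hre : ∀ᵐ s ∂(volume.restrict (Ioc (0:ℝ) 1)),
      (fun z : ℝ => ((z:ℂ) ^ ((a:ℂ) - 1) * (1 - (z:ℂ)) ^ ((b:ℂ) - 1)).re) s
        = s ^ (a - 1) * (1 - s) ^ (b - 1) := by
    filter_upwards [ae_restrict_mem measurableSet_Ioc] with s hs
    rw [complex_eq_real_integrand hs, Complex.ofReal_re]
  exact (hc.re).congr hre

lemma realBeta {a b : ℝ} (ha : 0 < a) (hb : 0 < b) :
    ∫ s in Ioc (0:ℝ) 1, s ^ (a - 1) * (1 - s) ^ (b - 1)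
      = Real.Gamma a * Real.Gamma b / Real.Gamma (a + b) := by
  have key := Complex.Gamma_mul_Gamma_eq_betaIntegral (s := (a:ℂ)) (t := (b:ℂ))
    (by simpa using ha) (by simpa using hb)
  have hbeta : Complex.betaIntegral (a:ℂ) (b:ℂ)
      = ((∫ s in Ioc (0:ℝ) 1, s ^ (a - 1) * (1 - s) ^ (b - 1) : ℝ) : ℂ) := by
    rw [Complex.betaIntegral, intervalIntegral.integral_of_le zero_le_one]
    have step : ∫ (x : ℝ) in Ioc (0:ℝ) 1, (x:ℂ) ^ ((a:ℂ) - 1) * (1 - (x:ℂ)) ^ ((b:ℂ) - 1)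
        = ∫ (x : ℝ) in Ioc (0:ℝ) 1, ((x ^ (a - 1) * (1 - x) ^ (b - 1) : ℝ) : ℂ) := by
      apply setIntegral_congr_ae measurableSet_Ioc
      filter_upwards with s hs
      exact complex_eq_real_integrand hs
    rw [step]
    exact integral_ofReal
  rw [hbeta, ← Complex.ofReal_add, Complex.Gamma_ofReal, Complex.Gamma_ofReal,
    Complex.Gamma_ofReal, ← Complex.ofReal_mul, ← Complex.ofReal_mul] at key
  have h2 := Complex.ofReal_inj.mp key
  have hG : Real.Gamma (a + b) ≠ 0 := (Real.Gamma_pos_of_pos (by linarith)).ne'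
  field_simp
  linarith [h2]


lemma Gamma_nat_add_half' (j : ℕ) :
    Real.Gamma ((j:ℝ) + 1/2) = Real.Gamma (1/2) * (2*j)! / (4^j * j !) := by
  induction j with
  | zero => simp
  | succ j ih =>
    have h : ((j:ℝ) + 1) + 1/2 = ((j:ℝ) + 1/2) + 1 := by ring
    have hne : ((j:ℝ) + 1/2) ≠ 0 := by positivity
    rw [show (((j+1:ℕ)):ℝ) = (j:ℝ) + 1 by push_cast; ring, h, Real.Gamma_add_one hne, ih]
    have e1 : (2*(j+1))! = (2*j+2) * ((2*j+1) * (2*j)!) := by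
      rw [show 2*(j+1) = (2*j+1)+1 by ring, Nat.factorial_succ, Nat.factorial_succ]
    have e2 : (j+1)! = (j+1) * j ! := Nat.factorial_succ j
    rw [e1, e2]
    push_cast
    have h4 : (4:ℝ)^(j+1) = 4 * 4^j := by ring
    rw [h4]
    field_simp
    ring

lemma besselJ_le {ν x : ℝ} (hν : 1 ≤ ν) (hx : 0 ≤ x) :
    |besselJ ν x| ≤ (x/2) ^ ν / Real.Gamma (ν + 1) := by
  have hΓν1 : 0 < Real.Gamma (ν + 1) := Real.Gamma_pos_of_pos (by linarith)
  rcases eq_or_lt_of_le hx with h0 | hxpos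
  · have hb0 : besselJ ν x = 0 := by
      rw [besselJ, ← h0]
      rw [show ((0:ℝ)/2) = 0 by norm_num]
      have : ∀ j : ℕ, ((-1:ℝ) ^ j / (Nat.factorial j * Real.Gamma (ν + j + 1)))
          * (0:ℝ) ^ (ν + 2 * (j : ℝ)) = 0 := by
        intro j
        rw [Real.zero_rpow (by positivity), mul_zero]
      rw [tsum_congr this, tsum_zero]
    rw [hb0, ← h0]
    rw [show ((0:ℝ)/2) = 0 by norm_num, Real.zero_rpow (by positivity)]
    simp
  -- main case x > 0
  have hx2 : 0 < x / 2 := by linarith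
  have hΓh : 0 < Real.Gamma (1/2) := Real.Gamma_pos_of_pos (by norm_num)
  have hΓν : 0 < Real.Gamma (ν + 1/2) := Real.Gamma_pos_of_pos (by linarith)
  set K : ℝ := (x/2) ^ ν / (Real.Gamma (1/2) * Real.Gamma (ν + 1/2)) with hK
  have hKpos : 0 < K := by positivity
  set F : ℕ → ℝ → ℝ := fun j s =>
    ((-1) ^ j * x ^ (2*j) / ((2*j)! : ℝ)) * (s ^ ((j:ℝ) - 1/2) * (1-s) ^ (ν - 1/2)) with hF
  set G : ℕ → ℝ → ℝ := fun j s => s ^ ((j:ℝ) - 1/2) * (1-s) ^ (ν - 1/2) with hG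
  have hGint : ∀ j : ℕ, IntegrableOn (G j) (Ioc (0:ℝ) 1) := by
    intro j
    have := realBeta_integrable (a := (j:ℝ) + 1/2) (b := ν + 1/2)
      (by positivity) (by linarith)
    rw [show ((j:ℝ) + 1/2) - 1 = (j:ℝ) - 1/2 from by ring,
      show (ν + 1/2) - 1 = ν - 1/2 from by ring] at this
    exact this
  have hBeta : ∀ j : ℕ, ∫ s in Ioc (0:ℝ) 1, G j s
      = Real.Gamma ((j:ℝ) + 1/2) * Real.Gamma (ν + 1/2) / Real.Gamma (ν + j + 1) := by
    intro j
    have := realBeta (a := (j:ℝ) + 1/2) (b := ν + 1/2) (by positivity) (by linarith)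
    rw [show ((j:ℝ) + 1/2) - 1 = (j:ℝ) - 1/2 from by ring,
      show (ν + 1/2) - 1 = ν - 1/2 from by ring,
      show ((j:ℝ) + 1/2) + (ν + 1/2) = ν + j + 1 from by ring] at this
    exact this
  have hGnonneg : ∀ j : ℕ, ∀ s ∈ Ioc (0:ℝ) 1, 0 ≤ G j s := by
    intro j s hs
    exact mul_nonneg (Real.rpow_nonneg hs.1.le _) (Real.rpow_nonneg (by linarith [hs.2]) _)
  have hGle : ∀ j : ℕ, ∀ s ∈ Ioc (0:ℝ) 1, G j s ≤ G 0 s := by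
    intro j s hs
    refine mul_le_mul_of_nonneg_right ?_ (Real.rpow_nonneg (by linarith [hs.2]) _)
    exact Real.rpow_le_rpow_of_exponent_ge hs.1 hs.2 (by
      simp only [Nat.cast_zero]
      have : (0:ℝ) ≤ (j:ℝ) := Nat.cast_nonneg j
      linarith)
  have hBle : ∀ j : ℕ, ∫ s in Ioc (0:ℝ) 1, G j s ≤ ∫ s in Ioc (0:ℝ) 1, G 0 s := by
    intro j
    exact setIntegral_mono_on (hGint j) (hGint 0) measurableSet_Ioc (hGle j)
  have hFint : ∀ j : ℕ, Integrable (F j) (volume.restrict (Ioc (0:ℝ) 1)) := by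
    intro j
    exact (hGint j).const_mul _
  have hnorm_eq : ∀ j : ℕ, (∫ s in Ioc (0:ℝ) 1, ‖F j s‖)
      = x ^ (2*j) / ((2*j)! : ℝ) * ∫ s in Ioc (0:ℝ) 1, G j s := by
    intro j
    rw [← integral_const_mul]
    refine setIntegral_congr_fun measurableSet_Ioc ?_
    intro s hs
    have h1 : (0:ℝ) ≤ G j s := hGnonneg j s hs
    have hc : |((-1:ℝ)) ^ j * x ^ (2*j) / ((2*j)! : ℝ)| = x ^ (2*j) / ((2*j)! : ℝ) := by
      rw [abs_div, abs_mul, abs_pow, abs_pow, abs_neg, abs_one, one_pow, one_mul,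
        abs_of_nonneg hx, abs_of_nonneg (by positivity)]
    simp only [hF, Real.norm_eq_abs, abs_mul, hc, abs_of_nonneg h1]
    rw [← abs_mul]; exact congrArg (x ^ (2*j) / ((2*j)! : ℝ) * ·) (abs_of_nonneg h1)
  have hsum : Summable (fun j : ℕ => ∫ s in Ioc (0:ℝ) 1, ‖F j s‖) := by
    have hbase : Summable (fun j : ℕ => x ^ (2*j) / ((2*j)! : ℝ)) := by
      have h2 := (Real.summable_pow_div_factorial x).comp_injective
        (i := fun j : ℕ => 2 * j) (fun a b h => by simpa using h)
      exact h2
    refine Summable.of_nonneg_of_le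
      (fun j => integral_nonneg fun s => norm_nonneg _) (fun j => ?_)
      (hbase.mul_right (∫ s in Ioc (0:ℝ) 1, G 0 s))
    rw [hnorm_eq j]
    exact mul_le_mul_of_nonneg_left (hBle j) (by positivity)
  have hswap : ∑' j : ℕ, (∫ s in Ioc (0:ℝ) 1, F j s) = ∫ s in Ioc (0:ℝ) 1, ∑' j : ℕ, F j s :=
    integral_tsum_of_summable_integral_norm hFint hsum
  -- term identity
  have hterm : ∀ j : ℕ, ((-1:ℝ) ^ j / (Nat.factorial j * Real.Gamma (ν + j + 1)))
      * (x / 2) ^ (ν + 2 * (j : ℝ)) = K * ∫ s in Ioc (0:ℝ) 1, F j s := by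
    intro j
    have hint : ∫ s in Ioc (0:ℝ) 1, F j s
        = ((-1) ^ j * x ^ (2*j) / ((2*j)! : ℝ)) * ∫ s in Ioc (0:ℝ) 1, G j s := by
      rw [← integral_const_mul]
    rw [hint, hBeta j, Gamma_nat_add_half']
    have hΓj : 0 < Real.Gamma (ν + j + 1) := Real.Gamma_pos_of_pos (by positivity)
    have hrw : (x / 2) ^ (ν + 2 * (j : ℝ)) = (x/2) ^ ν * (x/2) ^ (2*j : ℕ) := by
      rw [show ν + 2 * (j : ℝ) = ν + ((2*j : ℕ) : ℝ) by push_cast; ring,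
        Real.rpow_add hx2, Real.rpow_natCast]
    rw [hrw, hK]
    have h4 : ((x:ℝ)/2) ^ (2*j : ℕ) = x ^ (2*j) / 4 ^ j := by
      rw [div_pow, show ((2:ℝ)) ^ (2*j) = 4 ^ j by rw [pow_mul]; norm_num]
    rw [h4]
    have hfj : (Nat.factorial j : ℝ) ≠ 0 := by positivity
    have hf2j : (((2*j)! : ℕ) : ℝ) ≠ 0 := by positivity
    field_simp
  have hbessel : besselJ ν x = K * ∫ s in Ioc (0:ℝ) 1, ∑' j : ℕ, F j s := by
    rw [besselJ, tsum_congr hterm, tsum_mul_left, hswap]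
  -- pointwise sum
  have hpt : ∀ s ∈ Ioc (0:ℝ) 1, ∑' j : ℕ, F j s
      = (s ^ (-(1/2) : ℝ) * (1-s) ^ (ν - 1/2)) * Real.cos (x * Real.sqrt s) := by
    intro s hs
    have hc := (Real.hasSum_cos (x * Real.sqrt s)).mul_left
      (s ^ (-(1/2) : ℝ) * (1-s) ^ (ν - 1/2))
    have heq : (fun j : ℕ => (s ^ (-(1/2) : ℝ) * (1-s) ^ (ν - 1/2))
        * ((-1) ^ j * (x * Real.sqrt s) ^ (2*j) / ((2*j)! : ℝ))) = fun j => F j s := by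
      funext j
      have hss : Real.sqrt s ^ (2*j) = s ^ j := by
        rw [pow_mul, Real.sq_sqrt hs.1.le]
      have h1 : (x * Real.sqrt s) ^ (2*j) = x ^ (2*j) * s ^ j := by rw [mul_pow, hss]
      have h2 : s ^ ((j:ℝ) - 1/2) = s ^ j * s ^ (-(1/2) : ℝ) := by
        rw [show (j:ℝ) - 1/2 = (j:ℝ) + (-(1/2)) by ring, Real.rpow_add hs.1,
          Real.rpow_natCast]
      simp only [hF, h1, h2]
      ring
    have hsum2 : HasSum (fun j => F j s)
        ((s ^ (-(1/2) : ℝ) * (1-s) ^ (ν - 1/2)) * Real.cos (x * Real.sqrt s)) := heq ▸ hc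
    exact hsum2.tsum_eq
  -- dominator
  have hDint : IntegrableOn (fun s : ℝ => s ^ (-(1/2) : ℝ) * (1-s) ^ (ν - 1/2))
      (Ioc (0:ℝ) 1) := by
    have := hGint 0
    simpa [hG, show ((0:ℕ):ℝ) - 1/2 = (-(1/2) : ℝ) by norm_num] using this
  have hDval : (∫ s in Ioc (0:ℝ) 1, s ^ (-(1/2) : ℝ) * (1-s) ^ (ν - 1/2))
      = Real.Gamma (1/2) * Real.Gamma (ν + 1/2) / Real.Gamma (ν + 1) := by
    have := hBeta 0
    simp only [hG, Nat.cast_zero, show ((0:ℝ)) - 1/2 = (-(1/2) : ℝ) by norm_num,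
      show (0:ℝ) + 1/2 = 1/2 by norm_num, show ν + (0:ℝ) + 1 = ν + 1 by ring] at this
    exact this
  have hIb : ‖∫ s in Ioc (0:ℝ) 1, ∑' j : ℕ, F j s‖
      ≤ Real.Gamma (1/2) * Real.Gamma (ν + 1/2) / Real.Gamma (ν + 1) := by
    rw [← hDval]
    refine norm_integral_le_of_norm_le hDint ?_
    filter_upwards [ae_restrict_mem measurableSet_Ioc] with s hs
    rw [hpt s hs]
    have hg : 0 ≤ s ^ (-(1/2) : ℝ) * (1-s) ^ (ν - 1/2) :=
      mul_nonneg (Real.rpow_nonneg hs.1.le _) (Real.rpow_nonneg (by linarith [hs.2]) _)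
    rw [Real.norm_eq_abs, abs_mul, abs_of_nonneg hg]
    calc (s ^ (-(1/2) : ℝ) * (1-s) ^ (ν - 1/2)) * |Real.cos (x * Real.sqrt s)|
        ≤ (s ^ (-(1/2) : ℝ) * (1-s) ^ (ν - 1/2)) * 1 :=
          mul_le_mul_of_nonneg_left (Real.abs_cos_le_one _) hg
      _ = s ^ (-(1/2) : ℝ) * (1-s) ^ (ν - 1/2) := mul_one _
  rw [hbessel, abs_mul, abs_of_nonneg hKpos.le]
  calc K * |∫ s in Ioc (0:ℝ) 1, ∑' j : ℕ, F j s|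
      ≤ K * (Real.Gamma (1/2) * Real.Gamma (ν + 1/2) / Real.Gamma (ν + 1)) :=
        mul_le_mul_of_nonneg_left hIb hKpos.le
    _ = (x/2) ^ ν / Real.Gamma (ν + 1) := by
        rw [hK]; field_simp


lemma Gamma_lower {ν : ℝ} (hν : 1 ≤ ν) :
    1/2 * (Real.sqrt ν * (ν / Real.exp 1) ^ ν) ≤ Real.Gamma (ν + 1) := by
  have hν0 : 0 < ν := by linarith
  set n : ℕ := ⌊ν⌋₊ with hn
  have hn1 : 1 ≤ n := Nat.le_floor (by exact_mod_cast hν)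
  have hn0 : (0:ℝ) < n := by exact_mod_cast hn1
  have hn0' : (1:ℝ) ≤ n := by exact_mod_cast hn1
  have hnν : (n:ℝ) ≤ ν := Nat.floor_le hν0.le
  have hνn1 : ν < n + 1 := Nat.lt_floor_add_one ν
  have hν2n : ν ≤ 2 * n := by linarith
  -- Stirling lower bound for n!
  have hst : Real.sqrt π ≤ Stirling.stirlingSeq n := by
    have ht : Tendsto (Stirling.stirlingSeq ∘ Nat.succ) atTop (nhds (Real.sqrt π)) :=
      Stirling.tendsto_stirlingSeq_sqrt_pi.comp (tendsto_add_atTop_nat 1)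
    have h9 := Stirling.stirlingSeq'_antitone.le_of_tendsto ht (n-1)
    simpa [Function.comp, Nat.succ_eq_add_one, Nat.sub_add_cancel hn1] using h9
  have hDpos : 0 < Real.sqrt (2*n) * ((n:ℝ)/Real.exp 1)^(n:ℕ) := by positivity
  have hfact : Real.sqrt π * (Real.sqrt (2*n) * ((n:ℝ)/Real.exp 1)^(n:ℕ)) ≤ (n ! : ℝ) := by
    rw [Stirling.stirlingSeq] at hst
    exact (le_div_iff₀ hDpos).mp hst
  -- convexity bound : n! * n^(ν-n) ≤ Γ(ν+1)
  have hΓpos : 0 < Real.Gamma (ν+1) := Real.Gamma_pos_of_pos (by linarith)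
  have hΓlow : (n ! : ℝ) * (n:ℝ) ^ (ν - n) ≤ Real.Gamma (ν + 1) := by
    rcases eq_or_lt_of_le hnν with heq | hlt
    · rw [← heq, sub_self, Real.rpow_zero, mul_one]
      rw [show ((n:ℝ) + 1) = ((n:ℕ):ℝ) + 1 by norm_num, Real.Gamma_nat_eq_factorial]
    · have hΓn : 0 < Real.Gamma n := Real.Gamma_pos_of_pos hn0
      have hslope := Real.convexOn_log_Gamma.slope_mono_adjacent
        (Set.mem_Ioi.mpr hn0) (Set.mem_Ioi.mpr (by linarith : (0:ℝ) < ν + 1))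
        (by linarith : (n:ℝ) < (n:ℝ) + 1) (by linarith : (n:ℝ) + 1 < ν + 1)
      have hfn1 : Real.Gamma ((n:ℝ) + 1) = (n ! : ℝ) := by
        rw [show ((n:ℝ) + 1) = ((n:ℕ):ℝ) + 1 by norm_num, Real.Gamma_nat_eq_factorial]
      have hfe : Real.Gamma ((n:ℝ) + 1) = n * Real.Gamma n := Real.Gamma_add_one hn0.ne'
      have hlog : (Real.log ∘ Real.Gamma) ((n:ℝ)+1) - (Real.log ∘ Real.Gamma) (n:ℝ)
          = Real.log n := by
        simp only [Function.comp_apply, hfe, Real.log_mul hn0.ne' hΓn.ne']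
        ring
      have h1 : ((n:ℝ) + 1 - (n:ℝ)) = 1 := by ring
      -- hslope : (f(n+1) - f n)/(n+1-n) ≤ (f(ν+1) - f(n+1))/(ν+1-(n+1))
      have key : Real.log ((n ! : ℝ)) + (ν - n) * Real.log n
          ≤ Real.log (Real.Gamma (ν+1)) := by
        have hd : (0:ℝ) < ν - n := by linarith
        have h2 : Real.log n ≤ ((Real.log ∘ Real.Gamma) (ν+1)
            - (Real.log ∘ Real.Gamma) ((n:ℝ)+1)) / (ν + 1 - ((n:ℝ)+1)) := by
          calc Real.log n
              = ((Real.log ∘ Real.Gamma) ((n:ℝ)+1) - (Real.log ∘ Real.Gamma) (n:ℝ))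
                / ((n:ℝ) + 1 - (n:ℝ)) := by rw [hlog, h1, div_one]
            _ ≤ _ := hslope
        rw [show ν + 1 - ((n:ℝ)+1) = ν - n by ring] at h2
        have h3 := (le_div_iff₀ hd).mp h2
        simp only [Function.comp_apply, hfn1] at h3
        linarith
      have := Real.exp_le_exp.mpr key
      rw [Real.exp_add, Real.exp_log (by positivity : (0:ℝ) < (n ! : ℝ)),
        Real.exp_log hΓpos] at this
      rw [Real.rpow_def_of_pos hn0, mul_comm (Real.log n)]
      exact this
  -- analytic inequality
  have hmain : 1/2 * (Real.sqrt ν * (ν / Real.exp 1) ^ ν)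
      ≤ Real.sqrt π * (Real.sqrt (2*n) * ((n:ℝ)/Real.exp 1)^(n:ℕ)) * (n:ℝ) ^ (ν - n) := by
    have hsq : Real.sqrt ν ≤ Real.sqrt (2*n) := Real.sqrt_le_sqrt (by linarith)
    have hlog1 : Real.log ν - Real.log n ≤ (ν - n) / n := by
      have h := Real.log_le_sub_one_of_pos (show (0:ℝ) < ν / n by positivity)
      rw [Real.log_div hν0.ne' hn0.ne'] at h
      have : ν / n - 1 = (ν - n)/n := by field_simp
      linarith [this ▸ h]
    have h2sqpi : Real.exp 1 ≤ 2 * Real.sqrt π := by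
      nlinarith [Real.sq_sqrt Real.pi_pos.le, Real.sqrt_nonneg π, Real.pi_gt_three,
        Real.exp_one_lt_d9]
    -- log form: ν log ν - ν log n ≤ log (2√π) + (ν - n)
    have hkey : ν * Real.log ν - ν * Real.log n ≤ Real.log (2 * Real.sqrt π) + (ν - n) := by
      have hb : ν * (Real.log ν - Real.log n) ≤ ν * ((ν - n)/n) :=
        mul_le_mul_of_nonneg_left hlog1 hν0.le
      have hc : ν * ((ν - n)/n) ≤ (ν - n) + 1 := by
        rw [div_eq_mul_inv, ← mul_assoc]
        have hθ : 0 ≤ ν - n := by linarith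
        have h4 : ν * (ν - n) ≤ ((n:ℝ)+1) * (ν - n) := by nlinarith
        have h5 : ν * (ν - n) * (n:ℝ)⁻¹ ≤ ((n:ℝ)+1) * (ν - n) * (n:ℝ)⁻¹ := by
          apply mul_le_mul_of_nonneg_right h4 (by positivity)
        have h6 : ((n:ℝ)+1) * (ν - n) * (n:ℝ)⁻¹ = (ν - n) + (ν - n) * (n:ℝ)⁻¹ := by
          field_simp
        have h7 : (ν - n) * (n:ℝ)⁻¹ ≤ 1 := by
          have hθ1 : ν - n ≤ 1 := by linarith
          have h7a : (ν - n) * (n:ℝ)⁻¹ ≤ 1 * (n:ℝ)⁻¹ :=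
            mul_le_mul_of_nonneg_right hθ1 (by positivity)
          have h8 : (n:ℝ)⁻¹ ≤ 1 := inv_le_one_of_one_le₀ hn0'
          linarith
        linarith [h5, h6 ▸ h5]
      have hd : 1 ≤ Real.log (2 * Real.sqrt π) := by
        rw [← Real.log_exp 1]
        exact Real.log_le_log (Real.exp_pos 1) h2sqpi
      nlinarith [hb, hc, hd]
    -- exponentiate
    have hsπ : 0 < Real.sqrt π := Real.sqrt_pos.mpr Real.pi_pos
    have lhs_eq : (ν / Real.exp 1) ^ ν = Real.exp (ν * Real.log ν - ν) := by
      rw [Real.rpow_def_of_pos (by positivity)]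
      rw [Real.log_div hν0.ne' (Real.exp_ne_zero 1), Real.log_exp]
      ring_nf
    have rhs_eq : Real.sqrt π * (((n:ℝ)/Real.exp 1)^(n:ℕ) * (n:ℝ) ^ (ν - n))
        = Real.sqrt π * Real.exp (ν * Real.log n - n) := by
      congr 1
      rw [← Real.rpow_natCast ((n:ℝ)/Real.exp 1) n, Real.rpow_def_of_pos (by positivity),
        Real.log_div hn0.ne' (Real.exp_ne_zero 1), Real.log_exp,
        Real.rpow_def_of_pos hn0, ← Real.exp_add]
      congr 1
      ring
    have hexp : (ν / Real.exp 1) ^ ν ≤ 2 * Real.sqrt π * Real.exp (ν * Real.log n - n) := by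
      rw [lhs_eq]
      have : ν * Real.log ν - ν ≤ Real.log (2 * Real.sqrt π) + (ν * Real.log n - n) := by
        linarith [hkey]
      calc Real.exp (ν * Real.log ν - ν)
          ≤ Real.exp (Real.log (2 * Real.sqrt π) + (ν * Real.log n - n)) :=
            Real.exp_le_exp.mpr this
        _ = 2 * Real.sqrt π * Real.exp (ν * Real.log n - n) := by
            rw [Real.exp_add, Real.exp_log (by positivity)]
      -- done
    calc 1/2 * (Real.sqrt ν * (ν / Real.exp 1) ^ ν)
        ≤ 1/2 * (Real.sqrt (2*n) * (2 * Real.sqrt π * Real.exp (ν * Real.log n - n))) := by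
          apply mul_le_mul_of_nonneg_left _ (by norm_num)
          have h8 : 0 ≤ (ν / Real.exp 1) ^ ν := Real.rpow_nonneg (by positivity) ν
          calc Real.sqrt ν * (ν / Real.exp 1) ^ ν
              ≤ Real.sqrt (2*n) * (ν / Real.exp 1) ^ ν := by
                apply mul_le_mul_of_nonneg_right hsq h8
            _ ≤ Real.sqrt (2*n) * (2 * Real.sqrt π * Real.exp (ν * Real.log n - n)) := by
                apply mul_le_mul_of_nonneg_left hexp (Real.sqrt_nonneg _)
      _ = Real.sqrt (2*n) * (Real.sqrt π * Real.exp (ν * Real.log n - n)) := by ring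
      _ = Real.sqrt (2*n) * (Real.sqrt π * (((n:ℝ)/Real.exp 1)^(n:ℕ) * (n:ℝ) ^ (ν - n))) := by
          rw [rhs_eq]
      _ = Real.sqrt π * (Real.sqrt (2*n) * (((n:ℝ)/Real.exp 1)^(n:ℕ) * (n:ℝ) ^ (ν - n))) := by
          ring
      _ = Real.sqrt π * (Real.sqrt (2*n) * ((n:ℝ)/Real.exp 1)^(n:ℕ)) * (n:ℝ) ^ (ν - n) := by
          ring
  calc 1/2 * (Real.sqrt ν * (ν / Real.exp 1) ^ ν)
      ≤ Real.sqrt π * (Real.sqrt (2*n) * ((n:ℝ)/Real.exp 1)^(n:ℕ)) * (n:ℝ) ^ (ν - n) := hmain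
    _ ≤ (n ! : ℝ) * (n:ℝ) ^ (ν - n) := by
        apply mul_le_mul_of_nonneg_right hfact (Real.rpow_nonneg hn0.le _)
    _ ≤ Real.Gamma (ν + 1) := hΓlow

/-- Upper bound `|J_ν(νδ)| ≪ ν^{-1/2} (eδ/2)^ν` for `ν ≥ 1` and `δ ≥ 0`. -/
theorem besselJ_upper_bound :
    ∃ C : ℝ, 0 < C ∧ ∀ ν : ℝ, 1 ≤ ν → ∀ δ : ℝ, 0 ≤ δ →
      |besselJ ν (ν * δ)| ≤ C * ν ^ (-(1 : ℝ) / 2) * (Real.exp 1 * δ / 2) ^ ν := by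
  refine ⟨2, by norm_num, fun ν hν δ hδ => ?_⟩
  have hν0 : 0 < ν := by linarith
  have h1 := besselJ_le hν (by positivity : (0:ℝ) ≤ ν * δ)
  have h2 := Gamma_lower hν
  have hden : 0 < 1/2 * (Real.sqrt ν * (ν / Real.exp 1) ^ ν) := by
    have : (0:ℝ) < (ν / Real.exp 1) ^ ν := Real.rpow_pos_of_pos (by positivity) ν
    have hs : 0 < Real.sqrt ν := Real.sqrt_pos.mpr hν0
    positivity
  have hnum : (0:ℝ) ≤ (ν * δ / 2) ^ ν := Real.rpow_nonneg (by positivity) ν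
  have hΓpos : 0 < Real.Gamma (ν + 1) := Real.Gamma_pos_of_pos (by linarith)
  have hstep : |besselJ ν (ν * δ)| ≤ (ν * δ / 2) ^ ν / (1/2 * (Real.sqrt ν * (ν / Real.exp 1) ^ ν)) := by
    calc |besselJ ν (ν * δ)| ≤ (ν * δ / 2) ^ ν / Real.Gamma (ν + 1) := h1
      _ ≤ (ν * δ / 2) ^ ν / (1/2 * (Real.sqrt ν * (ν / Real.exp 1) ^ ν)) := by
          apply div_le_div_of_nonneg_left hnum hden h2
  have hEδ : (Real.exp 1 * δ / 2) ^ ν = (ν * δ / 2) ^ ν / (ν / Real.exp 1) ^ ν := by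
    rw [← Real.div_rpow (by positivity) (le_of_lt (by positivity))]
    congr 1
    field_simp
  have hroot : ν ^ (-(1:ℝ)/2) = (Real.sqrt ν)⁻¹ := by
    rw [show (-(1:ℝ)/2) = -(1/2 : ℝ) by norm_num, Real.rpow_neg hν0.le,
      ← Real.sqrt_eq_rpow]
  have hpow : 0 < (ν / Real.exp 1) ^ ν := Real.rpow_pos_of_pos (by positivity) ν
  have hs : 0 < Real.sqrt ν := Real.sqrt_pos.mpr hν0
  have halg : (ν * δ / 2) ^ ν / (1/2 * (Real.sqrt ν * (ν / Real.exp 1) ^ ν))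
      = 2 * ν ^ (-(1:ℝ)/2) * (Real.exp 1 * δ / 2) ^ ν := by
    rw [hEδ, hroot]
    field_simp
  rw [← halg]
  exact hstep
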